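/- Under the assumptions of the abstract broken well-posedness theorem, if additionally V₀ = {0}, then for every continuous linear functional ℓ on W the broken problem: find (u,û) ∈ U × Û with b(u,v) + b̂(û,v) = ℓ(v) for all v ∈ W, has a unique solution, and its U-component u coincides with the unique solution of the unbroken problem b(u,v) = ℓ(v) for all v ∈ V. -/

import Mathlib

set_option maxHeartbeats 1000000
set_option synthInstance.maxHeartbeats 400000

open InnerProductSpace

/-- Riesz map associated to a continuous bilinear form. -/
noncomputable def BPUS.rieszMap {A B : Type*} [NormedAddCommGroup A] [InnerProductSpace ℝ A]
    [NormedAddCommGroup B] [InnerProductSpace ℝ B] [CompleteSpace B]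
    (c : A →L[ℝ] B →L[ℝ] ℝ) : A →ₗ[ℝ] B where
  toFun a := (toDual ℝ B).symm (c a)
  map_add' a a' := by
    show (toDual ℝ B).symm (c (a + a')) = (toDual ℝ B).symm (c a) + (toDual ℝ B).symm (c a')
    rw [map_add, map_add]
  map_smul' r a := by
    show (toDual ℝ B).symm (c (r • a)) = r • (toDual ℝ B).symm (c a)
    rw [map_smul, LinearIsometryEquiv.map_smulₛₗ]
    simp [starRingEnd_apply]

lemma BPUS.inner_rieszMap {A B : Type*} [NormedAddCommGroup A] [InnerProductSpace ℝ A]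
    [NormedAddCommGroup B] [InnerProductSpace ℝ B] [CompleteSpace B]
    (c : A →L[ℝ] B →L[ℝ] ℝ) (a : A) (v : B) :
    (inner ℝ (BPUS.rieszMap c a) v : ℝ) = c a v :=
  toDual_symm_apply

lemma BPUS.norm_rieszMap {A B : Type*} [NormedAddCommGroup A] [InnerProductSpace ℝ A]
    [NormedAddCommGroup B] [InnerProductSpace ℝ B] [CompleteSpace B]
    (c : A →L[ℝ] B →L[ℝ] ℝ) (a : A) : ‖BPUS.rieszMap c a‖ = ‖c a‖ := by
  show ‖(toDual ℝ B).symm (c a)‖ = ‖c a‖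
  exact LinearIsometryEquiv.norm_map _ _

lemma BPUS.isClosed_range {A B : Type*} [NormedAddCommGroup A] [InnerProductSpace ℝ A]
    [CompleteSpace A]
    [NormedAddCommGroup B] [InnerProductSpace ℝ B] [CompleteSpace B]
    (c : A →L[ℝ] B →L[ℝ] ℝ) {αc : ℝ} (hαc : 0 < αc)
    (hlow : ∀ a, αc * ‖a‖ ≤ ‖c a‖) :
    IsClosed ((LinearMap.range (BPUS.rieszMap c)) : Set B) := by
  have hanti : AntilipschitzWith ((⟨αc, hαc.le⟩ : NNReal))⁻¹ (BPUS.rieszMap c) := by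
    apply AddMonoidHomClass.antilipschitz_of_bound
    intro a
    rw [BPUS.norm_rieszMap]
    show ‖a‖ ≤ αc⁻¹ * ‖c a‖
    rw [inv_mul_eq_div, le_div_iff₀ hαc]
    nlinarith [hlow a]
  have hlip : LipschitzWith (Real.toNNReal ‖c‖) (BPUS.rieszMap c) := by
    apply AddMonoidHomClass.lipschitz_of_bound
    intro a
    rw [BPUS.norm_rieszMap]
    exact c.le_opNorm a
  have : (LinearMap.range (BPUS.rieszMap c) : Set B) = Set.range (BPUS.rieszMap c) :=
    LinearMap.coe_range _
  rw [this]
  exact hanti.isClosed_range hlip.uniformContinuous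

/-- Under the assumptions of the abstract broken well-posedness
theorem, if additionally `V₀ = {0}`, then for every `ℓ ∈ W'` the broken
problem `b(u,v) + b̂(û,v) = ℓ(v) ∀v ∈ W` is uniquely solvable, and its
`U`-component coincides with the unique solution of the unbroken problem
`b(u,v) = ℓ(v) ∀v ∈ V`. -/
theorem broken_problem_unique_solvability
    {U Uhat W : Type*}
    [NormedAddCommGroup U] [InnerProductSpace ℝ U] [CompleteSpace U]
    [NormedAddCommGroup Uhat] [InnerProductSpace ℝ Uhat] [CompleteSpace Uhat]
    [NormedAddCommGroup W] [InnerProductSpace ℝ W] [CompleteSpace W]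
    (V : Submodule ℝ W) (hVclosed : IsClosed (V : Set W))
    (b : U →L[ℝ] W →L[ℝ] ℝ) (bhat : Uhat →L[ℝ] W →L[ℝ] ℝ)
    (α : ℝ) (hα : 0 < α)
    (hA3 : ∀ u : U, α * ‖u‖ ≤ ‖(b u).comp V.subtypeL‖)
    (hV : (V : Set W) = {v : W | ∀ uh : Uhat, bhat uh v = 0})
    (αhat : ℝ) (hαhat : 0 < αhat)
    (hA4 : ∀ uh : Uhat, αhat * ‖uh‖ ≤ ‖bhat uh‖)
    -- triviality of V₀
    (hV0 : ∀ v ∈ V, (∀ u : U, b u v = 0) → v = 0)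
    (ℓ : W →L[ℝ] ℝ) :
    (∃! p : U × Uhat, ∀ v : W, b p.1 v + bhat p.2 v = ℓ v) ∧
    (∃! u : U, ∀ v ∈ V, b u v = ℓ v) ∧
    (∀ (p : U × Uhat) (u : U),
      (∀ v : W, b p.1 v + bhat p.2 v = ℓ v) →
      (∀ v ∈ V, b u v = ℓ v) → p.1 = u) := by
  haveI : CompleteSpace V := hVclosed.completeSpace_coe
  -- `bhat` vanishes on V
  have hbhatV : ∀ uh : Uhat, ∀ v ∈ V, bhat uh v = 0 := by
    intro uh v hv
    have : v ∈ {v : W | ∀ uh : Uhat, bhat uh v = 0} := hV ▸ hv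
    exact this uh
  -- kernel results from the inf-sup conditions
  have hKer : ∀ u : U, (∀ v ∈ V, b u v = 0) → u = 0 := by
    intro u hu
    have h0 : (b u).comp V.subtypeL = 0 := ContinuousLinearMap.ext fun v => hu v v.2
    have this : α * ‖u‖ ≤ 0 := by
      have h1 := hA3 u
      rw [h0, ContinuousLinearMap.opNorm_zero] at h1
      exact h1
    have hn : ‖u‖ = 0 := le_antisymm (by nlinarith [norm_nonneg u]) (norm_nonneg u)
    exact norm_eq_zero.mp hn
  have hKerHat : ∀ uh : Uhat, (∀ v : W, bhat uh v = 0) → uh = 0 := by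
    intro uh hu
    have h0 : bhat uh = 0 := ContinuousLinearMap.ext hu
    have this : αhat * ‖uh‖ ≤ 0 := by
      have h1 := hA4 uh
      rw [h0, ContinuousLinearMap.opNorm_zero] at h1
      exact h1
    have hn : ‖uh‖ = 0 := le_antisymm (by nlinarith [norm_nonneg uh]) (norm_nonneg uh)
    exact norm_eq_zero.mp hn
  -- the restricted bilinear form on V
  set Bv : U →L[ℝ] V →L[ℝ] ℝ :=
    ((ContinuousLinearMap.compL ℝ V W ℝ).flip V.subtypeL).comp b with hBvdef
  have hBvapp : ∀ (u : U) (v : V), Bv u v = b u (v : W) := fun u v => rfl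
  have hBveq : ∀ u : U, Bv u = (b u).comp V.subtypeL := fun u => rfl
  -- Riesz map for Bv and surjectivity onto V
  set S := BPUS.rieszMap Bv with hSdef
  have hSlow : ∀ u : U, α * ‖u‖ ≤ ‖Bv u‖ := by intro u; rw [hBveq]; exact hA3 u
  have hMclosed : IsClosed ((LinearMap.range S : Submodule ℝ V) : Set V) :=
    BPUS.isClosed_range Bv hα hSlow
  haveI : CompleteSpace (LinearMap.range S : Submodule ℝ V) := hMclosed.completeSpace_coe
  have hMtop : (LinearMap.range S : Submodule ℝ V) = ⊤ := by
    have horth : (LinearMap.range S : Submodule ℝ V)ᗮ = ⊥ := by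
      rw [Submodule.eq_bot_iff]
      intro v hv
      have hv' : ∀ u : U, b u (v : W) = 0 := by
        intro u
        have := (Submodule.mem_orthogonal _ v).mp hv (S u) ⟨u, rfl⟩
        rw [BPUS.inner_rieszMap] at this
        rw [← hBvapp u v]
        exact this
      have : (v : W) = 0 := hV0 v v.2 hv'
      exact Subtype.ext this
    calc (LinearMap.range S : Submodule ℝ V)
        = (LinearMap.range S : Submodule ℝ V)ᗮᗮ := (Submodule.orthogonal_orthogonal _).symm
      _ = (⊥ : Submodule ℝ V)ᗮ := by rw [horth]
      _ = ⊤ := Submodule.bot_orthogonal_eq_top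
  -- solve the unbroken problem
  obtain ⟨u₀, hu₀⟩ : ∃ u : U, S u = (toDual ℝ V).symm (ℓ.comp V.subtypeL) := by
    have : (toDual ℝ V).symm (ℓ.comp V.subtypeL) ∈ (LinearMap.range S : Submodule ℝ V) := by
      rw [hMtop]; trivial
    exact this
  have hu₀sol : ∀ v ∈ V, b u₀ v = ℓ v := by
    intro v hv
    have h1 : (inner ℝ (S u₀) (⟨v, hv⟩ : V) : ℝ) = Bv u₀ ⟨v, hv⟩ := BPUS.inner_rieszMap _ _ _
    have h2 : (inner ℝ ((toDual ℝ V).symm (ℓ.comp V.subtypeL)) (⟨v, hv⟩ : V) : ℝ)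
        = ℓ.comp V.subtypeL ⟨v, hv⟩ := toDual_symm_apply
    rw [hu₀] at h1
    rw [h2] at h1
    exact (hBvapp u₀ ⟨v, hv⟩ ▸ h1).symm
  -- uniqueness of the unbroken solution
  have hUnbrokenUniq : ∀ u u' : U, (∀ v ∈ V, b u v = ℓ v) → (∀ v ∈ V, b u' v = ℓ v) → u = u' := by
    intro u u' hu hu'
    have : u - u' = 0 := by
      apply hKer
      intro v hv
      rw [map_sub, ContinuousLinearMap.sub_apply, hu v hv, hu' v hv, sub_self]
    exact sub_eq_zero.mp this
  -- Riesz map for bhat : range = Vᗮ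
  set That := BPUS.rieszMap bhat with hThatdef
  have hMhClosed : IsClosed ((LinearMap.range That : Submodule ℝ W) : Set W) :=
    BPUS.isClosed_range bhat hαhat hA4
  haveI : CompleteSpace (LinearMap.range That : Submodule ℝ W) := hMhClosed.completeSpace_coe
  have hVorth : V = (LinearMap.range That : Submodule ℝ W)ᗮ := by
    ext v
    rw [Submodule.mem_orthogonal]
    constructor
    · intro hv w hw
      obtain ⟨uh, rfl⟩ := hw
      rw [BPUS.inner_rieszMap]
      exact hbhatV uh v hv
    · intro h
      have : ∀ uh : Uhat, bhat uh v = 0 := by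
        intro uh
        rw [← BPUS.inner_rieszMap bhat uh v]
        exact h (That uh) ⟨uh, rfl⟩
      have hmem : v ∈ (V : Set W) := by rw [hV]; exact this
      exact hmem
  -- solve the broken problem : existence
  have hBrokenEx : ∃ p : U × Uhat, ∀ v : W, b p.1 v + bhat p.2 v = ℓ v := by
    set m : W →L[ℝ] ℝ := ℓ - b u₀ with hmdef
    have hwmem : (toDual ℝ W).symm m ∈ (LinearMap.range That : Submodule ℝ W) := by
      have : (toDual ℝ W).symm m ∈ Vᗮ := by
        rw [Submodule.mem_orthogonal']
        intro v hv
        have : (inner ℝ ((toDual ℝ W).symm m) v : ℝ) = m v := toDual_symm_apply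
        rw [this, hmdef, ContinuousLinearMap.sub_apply, hu₀sol v hv, sub_self]
      rw [hVorth, Submodule.orthogonal_orthogonal] at this
      exact this
    obtain ⟨uh₀, huh₀⟩ := hwmem
    have hbh : bhat uh₀ = m := (toDual ℝ W).symm.injective huh₀
    refine ⟨(u₀, uh₀), fun v => ?_⟩
    have : bhat uh₀ v = ℓ v - b u₀ v := by
      rw [hbh, hmdef, ContinuousLinearMap.sub_apply]
    rw [this]
    ring
  -- uniqueness of the broken solution
  have hBrokenUniq : ∀ p q : U × Uhat,
      (∀ v : W, b p.1 v + bhat p.2 v = ℓ v) →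
      (∀ v : W, b q.1 v + bhat q.2 v = ℓ v) → p = q := by
    intro p q hp hq
    have h1 : p.1 = q.1 := by
      apply hUnbrokenUniq <;> intro v hv
      · have := hp v; rw [hbhatV p.2 v hv] at this; linarith
      · have := hq v; rw [hbhatV q.2 v hv] at this; linarith
    have h2 : p.2 = q.2 := by
      have : p.2 - q.2 = 0 := by
        apply hKerHat
        intro v
        have hpv := hp v
        have hqv := hq v
        rw [h1] at hpv
        rw [map_sub, ContinuousLinearMap.sub_apply]
        linarith
      exact sub_eq_zero.mp this
    exact Prod.ext h1 h2
  obtain ⟨p₀, hp₀⟩ := hBrokenEx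
  refine ⟨⟨p₀, hp₀, fun q hq => hBrokenUniq q p₀ hq hp₀⟩,
    ⟨u₀, hu₀sol, fun u hu => hUnbrokenUniq u u₀ hu hu₀sol⟩, ?_⟩
  intro p u hp hu
  apply hUnbrokenUniq
  · intro v hv
    have := hp v; rw [hbhatV p.2 v hv] at this; linarith
  · exact hu
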